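/- arXiv:1610.01922 — 3 statements merged into one kernel-verified Lean document; each statement's English description precedes it below -/
import Mathlib

section
/- Let (X,Y) be a random pair in ℝ^d × {0,1} with joint distribution μ, let η(x) = E[Y | X = x] be the regression function, and let 𝔅 be a class of measurable functions from ℝ^d to [0,1] that is totally bounded with respect to the supremum norm. Given i.i.d. samples (X_1,Y_1),…,(X_n,Y_n) from μ, let β_n ∈ 𝔅 be any minimizer over 𝔅 of the empirical squared error e_n(β) = (1/n) Σ_{i=1}^n (β(X_i) − Y_i)². Then almost surely E[(β_n(X) − Y)² | data] → inf_{β ∈ 𝔅} E[(β(X) − Y)²] as n → ∞; consequently, if inf_{β ∈ 𝔅} E[(β(X) − η(X))²] = 0, then the plug-in classification rule g_n(x) = 𝟙{β_n(x) > 1/2} is strongly consistent: its error probability L(g_n) = P(g_n(X) ≠ Y | data) converges almost surely to the Bayes risk L* = inf_g P(g(X) ≠ Y). -/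
open MeasureTheory ProbabilityTheory Filter

lemma integrable_of_bound {α : Type*} [MeasurableSpace α] (μ : Measure α) [IsFiniteMeasure μ]
    {f : α → ℝ} (hf : AEStronglyMeasurable f μ) (C : ℝ) (h : ∀ᵐ x ∂μ, |f x| ≤ C) :
    Integrable f μ :=
  (integrable_const C).mono' hf (by simpa [Real.norm_eq_abs] using h)

lemma loss_lip {a b y : ℝ} (ha : a ∈ Set.Icc (0:ℝ) 1) (hb : b ∈ Set.Icc (0:ℝ) 1)
    (hy : y = 0 ∨ y = 1) : |(a - y)^2 - (b - y)^2| ≤ 2 * |a - b| := by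
  have h : (a - y)^2 - (b - y)^2 = (a - b) * ((a - y) + (b - y)) := by ring
  rw [h, abs_mul]
  have hs : |(a - y) + (b - y)| ≤ 2 := by
    rw [abs_le]
    rcases hy with rfl | rfl <;> constructor <;>
      [nlinarith [ha.1, hb.1]; nlinarith [ha.2, hb.2]; nlinarith [ha.1, hb.1]; nlinarith [ha.2, hb.2]]
  calc |a - b| * |(a - y) + (b - y)| ≤ |a - b| * 2 := by gcongr
    _ = 2 * |a - b| := by ring

lemma loss_le_one {a y : ℝ} (ha : a ∈ Set.Icc (0:ℝ) 1) (hy : y = 0 ∨ y = 1) :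
    (a - y)^2 ≤ 1 := by
  rcases hy with rfl | rfl <;> nlinarith [ha.1, ha.2]

lemma cs_ineq {α : Type*} [MeasurableSpace α] (μ : Measure α) [IsProbabilityMeasure μ]
    (f : α → ℝ) (hf : Measurable f) (hb : ∀ x, |f x| ≤ 1) :
    (∫ x, |f x| ∂μ)^2 ≤ ∫ x, (f x)^2 ∂μ := by
  set a := ∫ x, |f x| ∂μ with ha
  have habs : Integrable (fun x => |f x|) μ :=
    integrable_of_bound μ hf.abs.aestronglyMeasurable 1 (ae_of_all _ fun x => by
      simpa [abs_abs] using hb x)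
  have hsq : Integrable (fun x => (f x)^2) μ :=
    integrable_of_bound μ (hf.pow_const 2).aestronglyMeasurable 1 (ae_of_all _ fun x => by
      rw [abs_of_nonneg (sq_nonneg _), sq_le_one_iff_abs_le_one]; exact hb x)
  have h0 : 0 ≤ ∫ x, (|f x| - a)^2 ∂μ := integral_nonneg fun x => sq_nonneg _
  have hexp : ∀ x, (|f x| - a)^2 = (f x)^2 - (2*a) * |f x| + a^2 := fun x => by
    rw [sub_sq, sq_abs]; ring
  rw [integral_congr_ae (ae_of_all _ hexp)] at h0
  have hint1 : Integrable (fun x => (2*a) * |f x|) μ := habs.const_mul _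
  have hint2 : Integrable (fun x => (f x)^2 - (2*a) * |f x|) μ := hsq.sub hint1
  have h1 : ∫ x, ((f x)^2 - (2*a) * |f x| + a^2) ∂μ
      = (∫ x, (f x)^2 ∂μ) - (2*a) * a + a^2 := by
    rw [integral_add hint2 (integrable_const _), integral_sub hsq hint1,
      integral_const_mul, integral_const]
    simp [measure_univ, ha]
  rw [h1] at h0
  nlinarith [h0]

lemma avg_lip {n : ℕ} {a b : ℕ → ℝ} {c : ℝ} (h : ∀ i < n, |a i - b i| ≤ c) (hc : 0 ≤ c) :
    |(1/(n:ℝ)) * ∑ i ∈ Finset.range n, a i - (1/(n:ℝ)) * ∑ i ∈ Finset.range n, b i| ≤ c := by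
  rcases Nat.eq_zero_or_pos n with rfl | hn
  · simp [hc]
  · rw [← mul_sub, ← Finset.sum_sub_distrib, abs_mul,
      abs_of_nonneg (by positivity : (0:ℝ) ≤ 1/(n:ℝ))]
    have h1 : |∑ i ∈ Finset.range n, (a i - b i)| ≤ (n:ℝ) * c := by
      calc |∑ i ∈ Finset.range n, (a i - b i)|
          ≤ ∑ i ∈ Finset.range n, |a i - b i| := Finset.abs_sum_le_sum_abs _ _
        _ ≤ ∑ _i ∈ Finset.range n, c :=
            Finset.sum_le_sum fun i hi => h i (Finset.mem_range.1 hi)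
        _ = (n:ℝ) * c := by rw [Finset.sum_const, Finset.card_range, nsmul_eq_mul]
    calc (1/(n:ℝ)) * |∑ i ∈ Finset.range n, (a i - b i)| ≤ (1/(n:ℝ)) * ((n:ℝ)*c) := by
          gcongr
      _ = c := by
          have hn' : (n:ℝ) ≠ 0 := Nat.cast_ne_zero.2 hn.ne'
          field_simp
lemma slln_risk {d : ℕ} {Ω : Type*} [MeasureSpace Ω] [IsProbabilityMeasure (ℙ : Measure Ω)]
    (X : ℕ → Ω → (Fin d → ℝ)) (Y : ℕ → Ω → ℝ)
    (hmeas : ∀ n, Measurable fun ω => (X n ω, Y n ω))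
    (hiid : iIndepFun (fun n ω => (X n ω, Y n ω)) ℙ)
    (μ : Measure ((Fin d → ℝ) × ℝ)) (hμ : ∀ n, Measure.map (fun ω => (X n ω, Y n ω)) ℙ = μ)
    (hY : ∀ n ω, Y n ω = 0 ∨ Y n ω = 1)
    (β : (Fin d → ℝ) → ℝ) (hβ : Measurable β) (hβ01 : ∀ x, β x ∈ Set.Icc (0:ℝ) 1) :
    ∀ᵐ ω ∂ℙ, Tendsto (fun n : ℕ => (1/(n:ℝ)) * ∑ i ∈ Finset.range n, (β (X i ω) - Y i ω)^2)
      atTop (nhds (∫ p, (β p.1 - p.2)^2 ∂μ)) := by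
  set f : (Fin d → ℝ) × ℝ → ℝ := fun p => (β p.1 - p.2)^2 with hfdef
  have hfmeas : Measurable f := ((hβ.comp measurable_fst).sub measurable_snd).pow_const 2
  set Z : ℕ → Ω → ℝ := fun i ω => f (X i ω, Y i ω) with hZdef
  have hZmeas : ∀ i, Measurable (Z i) := fun i => hfmeas.comp (hmeas i)
  have hZbd : ∀ i ω, |Z i ω| ≤ 1 := fun i ω => by
    rw [abs_of_nonneg (sq_nonneg _)]; exact loss_le_one (hβ01 _) (hY i ω)
  have hint : Integrable (Z 0) ℙ :=
    integrable_of_bound ℙ (hZmeas 0).aestronglyMeasurable 1 (ae_of_all _ (hZbd 0))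
  have hindep : Pairwise (Function.onFun (IndepFun · · ℙ) Z) := fun i j hij =>
    (hiid.indepFun hij).comp hfmeas hfmeas
  have hident : ∀ i, IdentDistrib (Z i) (Z 0) ℙ ℙ := fun i =>
    IdentDistrib.comp ⟨(hmeas i).aemeasurable, (hmeas 0).aemeasurable, by rw [hμ i, hμ 0]⟩ hfmeas
  have h := strong_law_ae_real Z hint hindep hident
  have hEZ : ℙ[Z 0] = ∫ p, f p ∂μ := by
    rw [← hμ 0, integral_map (hmeas 0).aemeasurable hfmeas.aestronglyMeasurable]
  filter_upwards [h] with ω hω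
  rw [hEZ] at hω
  have he : (fun n : ℕ => (1/(n:ℝ)) * ∑ i ∈ Finset.range n, (β (X i ω) - Y i ω)^2)
      = fun n : ℕ => (∑ i ∈ Finset.range n, Z i ω)/(n:ℝ) := by
    funext n; rw [one_div, inv_mul_eq_div]
  rw [he]; exact hω
lemma eta_mem_Icc {α : Type*} [MeasurableSpace α] (μ : Measure (α × ℝ)) [IsProbabilityMeasure μ]
    (hae : ∀ᵐ p ∂μ, p.2 = 0 ∨ p.2 = 1)
    (η : α → ℝ) (hη_meas : Measurable η)
    (hη : ∀ A : Set α, MeasurableSet A →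
      ∫ p in {p : α × ℝ | p.1 ∈ A}, p.2 ∂μ = ∫ p in {p : α × ℝ | p.1 ∈ A}, η p.1 ∂μ) :
    ∀ᵐ p ∂μ, η p.1 ∈ Set.Icc (0:ℝ) 1 := by
  have hy0 : ∀ᵐ p ∂μ, (0:ℝ) ≤ p.2 := hae.mono fun p hp => by rcases hp with h | h <;> rw [h] <;> norm_num
  have hy1 : ∀ᵐ p ∂μ, p.2 ≤ (1:ℝ) := hae.mono fun p hp => by rcases hp with h | h <;> rw [h] <;> norm_num
  have hsnd_int : ∀ s : Set (α × ℝ), Integrable (fun p => p.2) (μ.restrict s) :=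
    fun s => integrable_of_bound _ measurable_snd.aestronglyMeasurable 1
      (ae_restrict_of_ae (hae.mono fun p hp => by rcases hp with h | h <;> rw [h] <;> norm_num))
  -- lower bound
  have hlow : μ {p : α × ℝ | η p.1 < 0} = 0 := by
    set A : ℕ → Set α := fun M => η ⁻¹' Set.Icc (-(M:ℝ)-1) (-(1/((M:ℝ)+1))) with hA
    have hAmeas : ∀ M, MeasurableSet (A M) := fun M => hη_meas measurableSet_Icc
    have hsmeas : ∀ M, MeasurableSet {p : α × ℝ | p.1 ∈ A M} := fun M => measurable_fst (hAmeas M)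
    have key : ∀ M : ℕ, μ {p : α × ℝ | p.1 ∈ A M} = 0 := by
      intro M
      set s := {p : α × ℝ | p.1 ∈ A M} with hs
      have hηint : IntegrableOn (fun p : α × ℝ => η p.1) s μ := by
        refine integrable_of_bound _ (hη_meas.comp measurable_fst).aestronglyMeasurable
          ((M:ℝ)+1) ((ae_restrict_mem (hsmeas M)).mono fun p hp => ?_)
        have h1 := hp.1; have h2 := hp.2
        rw [abs_le]
        constructor
        · linarith
        · have : (0:ℝ) < 1/((M:ℝ)+1) := by positivity
          nlinarith [Nat.cast_nonneg (α := ℝ) M]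
      have h2 : (0:ℝ) ≤ ∫ p in s, p.2 ∂μ :=
        integral_nonneg_of_ae (ae_restrict_of_ae hy0)
      have h3 : ∫ p in s, η p.1 ∂μ ≤ ∫ _ in s, (-(1/((M:ℝ)+1))) ∂μ := by
        refine setIntegral_mono_on hηint (integrableOn_const (measure_ne_top μ s))
          (hsmeas M) fun p hp => ?_
        exact hp.2
      rw [setIntegral_const] at h3
      have h4 := (hη (A M) (hAmeas M)).symm ▸ h2
      rw [hη (A M) (hAmeas M)] at h2
      have hnn : (0:ℝ) ≤ (μ s).toReal := ENNReal.toReal_nonneg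
      have hc : (0:ℝ) < 1/((M:ℝ)+1) := by positivity
      have hm0 : (μ s).toReal = 0 := by
        rw [smul_eq_mul, measureReal_def] at h3; nlinarith
      exact ((ENNReal.toReal_eq_zero_iff _).1 hm0).resolve_right (measure_ne_top μ s)
    refine measure_mono_null ?_ (measure_iUnion_null key)
    intro p hp
    have ht : η p.1 < 0 := hp
    obtain ⟨M, hM⟩ := exists_nat_ge (max (-η p.1) (1/(-η p.1)))
    refine Set.mem_iUnion.2 ⟨M, ?_⟩
    have h1 : -η p.1 ≤ M := le_trans (le_max_left _ _) hM
    have h2 : 1/(-η p.1) ≤ M := le_trans (le_max_right _ _) hM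
    constructor
    · linarith
    · have hpos : (0:ℝ) < -η p.1 := by linarith
      rw [div_le_iff₀ hpos] at h2
      have : 1/((M:ℝ)+1) ≤ -η p.1 := by
        rw [div_le_iff₀ (by positivity)]
        nlinarith
      linarith
  -- upper bound
  have hupp : μ {p : α × ℝ | 1 < η p.1} = 0 := by
    set A : ℕ → Set α := fun M => η ⁻¹' Set.Icc (1 + 1/((M:ℝ)+1)) ((M:ℝ)+2) with hA
    have hAmeas : ∀ M, MeasurableSet (A M) := fun M => hη_meas measurableSet_Icc
    have hsmeas : ∀ M, MeasurableSet {p : α × ℝ | p.1 ∈ A M} := fun M => measurable_fst (hAmeas M)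
    have key : ∀ M : ℕ, μ {p : α × ℝ | p.1 ∈ A M} = 0 := by
      intro M
      set s := {p : α × ℝ | p.1 ∈ A M} with hs
      have hηint : IntegrableOn (fun p : α × ℝ => η p.1) s μ := by
        refine integrable_of_bound _ (hη_meas.comp measurable_fst).aestronglyMeasurable
          ((M:ℝ)+2) ((ae_restrict_mem (hsmeas M)).mono fun p hp => ?_)
        have h1 := hp.1; have h2 := hp.2
        rw [abs_le]
        constructor
        · have : (0:ℝ) < 1/((M:ℝ)+1) := by positivity
          nlinarith [Nat.cast_nonneg (α := ℝ) M]
        · linarith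
      have h2 : ∫ p in s, p.2 ∂μ ≤ (μ s).toReal := by
        have := integral_mono_ae (hsnd_int s) (integrable_const 1) (ae_restrict_of_ae hy1)
        rwa [integral_const, measureReal_restrict_apply_univ, smul_eq_mul, mul_one] at this
      have h3 : (1 + 1/((M:ℝ)+1)) * (μ s).toReal ≤ ∫ p in s, η p.1 ∂μ := by
        have := setIntegral_mono_on (integrableOn_const (measure_ne_top μ s))
          hηint (hsmeas M) (fun p hp => hp.1)
        rwa [setIntegral_const, smul_eq_mul, mul_comm] at this
      rw [hη (A M) (hAmeas M)] at h2
      have hnn : (0:ℝ) ≤ (μ s).toReal := ENNReal.toReal_nonneg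
      have hc : (0:ℝ) < 1/((M:ℝ)+1) := by positivity
      have hm0 : (μ s).toReal = 0 := by nlinarith
      exact ((ENNReal.toReal_eq_zero_iff _).1 hm0).resolve_right (measure_ne_top μ s)
    refine measure_mono_null ?_ (measure_iUnion_null key)
    intro p hp
    have ht : 1 < η p.1 := hp
    obtain ⟨M, hM⟩ := exists_nat_ge (max (η p.1) (1/(η p.1 - 1)))
    refine Set.mem_iUnion.2 ⟨M, ?_⟩
    have h1 : η p.1 ≤ M := le_trans (le_max_left _ _) hM
    have h2 : 1/(η p.1 - 1) ≤ M := le_trans (le_max_right _ _) hM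
    constructor
    · have hpos : (0:ℝ) < η p.1 - 1 := by linarith
      rw [div_le_iff₀ hpos] at h2
      have : 1/((M:ℝ)+1) ≤ η p.1 - 1 := by
        rw [div_le_iff₀ (by positivity)]
        nlinarith
      linarith
    · linarith
  rw [ae_iff]
  refine measure_mono_null ?_ (measure_union_null hlow hupp)
  intro p hp
  simp only [Set.mem_Icc, not_and_or, not_le, Set.mem_setOf_eq] at hp ⊢
  rcases hp with h | h
  · exact Or.inl h
  · exact Or.inr h
lemma pullout {α : Type*} [MeasurableSpace α] (μ : Measure (α × ℝ)) [IsProbabilityMeasure μ]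
    (hae : ∀ᵐ p ∂μ, p.2 = 0 ∨ p.2 = 1)
    (η : α → ℝ) (hη_meas : Measurable η) (hη01 : ∀ x, η x ∈ Set.Icc (0:ℝ) 1)
    (hη : ∀ A : Set α, MeasurableSet A →
      ∫ p in {p : α × ℝ | p.1 ∈ A}, p.2 ∂μ = ∫ p in {p : α × ℝ | p.1 ∈ A}, η p.1 ∂μ)
    (g : α → ℝ) (hg : Measurable g) (C : ℝ) (hgC : ∀ x, |g x| ≤ C) :
    ∫ p, g p.1 * p.2 ∂μ = ∫ p, g p.1 * η p.1 ∂μ := by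
  have hm : MeasurableSpace.comap (Prod.fst : α × ℝ → α) inferInstance
      ≤ (inferInstance : MeasurableSpace (α × ℝ)) :=
    (measurable_fst : Measurable (Prod.fst : α × ℝ → α)).comap_le
  haveI : IsFiniteMeasure (μ.trim hm) := isFiniteMeasure_trim hm
  haveI : SigmaFinite (μ.trim hm) := inferInstance
  have hy_abs : ∀ᵐ p ∂μ, |p.2| ≤ 1 := hae.mono fun p hp => by
    rcases hp with h | h <;> rw [h] <;> norm_num
  have hsnd_int : Integrable (fun p : α × ℝ => p.2) μ :=
    integrable_of_bound _ measurable_snd.aestronglyMeasurable 1 hy_abs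
  have hmf_fst : Measurable[MeasurableSpace.comap Prod.fst inferInstance] (Prod.fst : α × ℝ → α) := fun s hs => ⟨s, hs, rfl⟩
  have hcond : (fun p : α × ℝ => η p.1) =ᵐ[μ] μ[fun p : α × ℝ => p.2 | MeasurableSpace.comap Prod.fst inferInstance] := by
    refine ae_eq_condExp_of_forall_setIntegral_eq hm hsnd_int ?_ ?_ ?_
    · intro s _ _
      exact integrable_of_bound _ ((hη_meas.comp measurable_fst).aestronglyMeasurable).restrict 1
        (ae_of_all _ fun p => abs_le.2 ⟨by linarith [(hη01 p.1).1], (hη01 p.1).2⟩)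
    · intro s hs _
      obtain ⟨A, hA, rfl⟩ := hs
      exact (hη A hA).symm
    · exact StronglyMeasurable.aestronglyMeasurable
        ((hη_meas.comp hmf_fst).stronglyMeasurable)
  have hgf_sm : StronglyMeasurable[MeasurableSpace.comap Prod.fst inferInstance] (fun p : α × ℝ => g p.1) :=
    (hg.comp hmf_fst).stronglyMeasurable
  have hint1 : Integrable (fun p : α × ℝ => g p.1 * p.2) μ := by
    refine integrable_of_bound _ ((hg.comp measurable_fst).mul
      measurable_snd).aestronglyMeasurable C (hy_abs.mono fun p hp => ?_)
    have h1 := hgC p.1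
    have h0 : (0:ℝ) ≤ C := le_trans (abs_nonneg _) h1
    calc |g p.1 * p.2| = |g p.1| * |p.2| := abs_mul _ _
      _ ≤ C * 1 := mul_le_mul h1 hp (abs_nonneg _) h0
      _ = C := mul_one C
  have hint1' : Integrable ((fun p : α × ℝ => g p.1) * fun p : α × ℝ => p.2) μ := hint1
  have hmul := condExp_mul_of_stronglyMeasurable_left (m := MeasurableSpace.comap Prod.fst inferInstance) hgf_sm hint1' hsnd_int
  calc ∫ p, g p.1 * p.2 ∂μ
      = ∫ p, ((fun p : α × ℝ => g p.1) * fun p : α × ℝ => p.2) p ∂μ := rfl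
    _ = ∫ p, (μ[(fun p : α × ℝ => g p.1) * fun p : α × ℝ => p.2|MeasurableSpace.comap Prod.fst inferInstance]) p ∂μ :=
        (integral_condExp hm).symm
    _ = ∫ p, ((fun p : α × ℝ => g p.1) * μ[fun p : α × ℝ => p.2|MeasurableSpace.comap Prod.fst inferInstance]) p ∂μ :=
        integral_congr_ae hmul
    _ = ∫ p, g p.1 * η p.1 ∂μ := by
        refine integral_congr_ae (hcond.mono fun p hp => ?_)
        rw [Pi.mul_apply, ← hp]

set_option maxHeartbeats 2000000

/-- Empirical squared error minimization over a totally bounded class `𝔅` of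
functions `ℝ^d → [0,1]` is strongly consistent: the conditional squared risk of the
empirical minimizer converges a.s. to the infimum risk over `𝔅`, and, if the regression
function `η` can be approximated arbitrarily well in `L²` by members of `𝔅`, the plug-in
classification rule `x ↦ 𝟙{β_n(x) > 1/2}` has conditional error probability converging
almost surely to the Bayes risk. -/
theorem empirical_squared_error_minimization_strongly_consistent
    {d : ℕ} {Ω : Type*} [MeasureSpace Ω] [IsProbabilityMeasure (ℙ : Measure Ω)]
    -- i.i.d. samples (X_i, Y_i) with common law μ on ℝ^d × ℝ, Y ∈ {0,1}
    (X : ℕ → Ω → (Fin d → ℝ)) (Y : ℕ → Ω → ℝ)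
    (hmeas : ∀ n, Measurable fun ω => (X n ω, Y n ω))
    (hiid : iIndepFun (fun n ω => (X n ω, Y n ω)) ℙ)
    (μ : Measure ((Fin d → ℝ) × ℝ))
    (hμ : ∀ n, Measure.map (fun ω => (X n ω, Y n ω)) ℙ = μ)
    (hY : ∀ n ω, Y n ω = 0 ∨ Y n ω = 1)
    -- the class 𝔅 of measurable functions ℝ^d → [0,1], totally bounded in sup norm
    (𝔅 : Set ((Fin d → ℝ) → ℝ))
    (h𝔅meas : ∀ β ∈ 𝔅, Measurable β)
    (h𝔅01 : ∀ β ∈ 𝔅, ∀ x, β x ∈ Set.Icc (0 : ℝ) 1)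
    (h𝔅tb : ∀ ε > (0 : ℝ), ∃ F : Finset ((Fin d → ℝ) → ℝ), ↑F ⊆ 𝔅 ∧
      ∀ β ∈ 𝔅, ∃ γ ∈ F, ∀ x, |β x - γ x| ≤ ε)
    -- β_n minimizes the empirical squared error over 𝔅
    (βn : ℕ → Ω → ((Fin d → ℝ) → ℝ))
    (hβn_mem : ∀ n ω, βn n ω ∈ 𝔅)
    (hβn_min : ∀ (n : ℕ) (ω : Ω), ∀ β ∈ 𝔅,
      (1 / (n : ℝ)) * ∑ i ∈ Finset.range n, (βn n ω (X i ω) - Y i ω) ^ 2 ≤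
        (1 / (n : ℝ)) * ∑ i ∈ Finset.range n, (β (X i ω) - Y i ω) ^ 2)
    -- the regression function η(x) = E[Y | X = x]
    (η : (Fin d → ℝ) → ℝ) (hη_meas : Measurable η)
    (hη : ∀ A : Set (Fin d → ℝ), MeasurableSet A →
      ∫ p in {p : (Fin d → ℝ) × ℝ | p.1 ∈ A}, p.2 ∂μ =
        ∫ p in {p : (Fin d → ℝ) × ℝ | p.1 ∈ A}, η p.1 ∂μ) :
    -- (1) a.s. convergence of the (conditional) squared risk to the infimum over 𝔅
    (∀ᵐ ω ∂ℙ, Tendsto (fun n => ∫ p, (βn n ω p.1 - p.2) ^ 2 ∂μ) atTop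
      (nhds (⨅ β : 𝔅, ∫ p, (β.1 p.1 - p.2) ^ 2 ∂μ))) ∧
    -- (2) if inf_{β ∈ 𝔅} E[(β(X) − η(X))²] = 0 then the plug-in rule is strongly consistent
    ((⨅ β : 𝔅, ∫ x, (β.1 x - η x) ^ 2 ∂(μ.map Prod.fst)) = 0 →
      ∀ᵐ ω ∂ℙ, Tendsto
        (fun n => (μ {p | (if 1 / 2 < βn n ω p.1 then (1 : ℝ) else 0) ≠ p.2}).toReal) atTop
        (nhds (⨅ g : {g : (Fin d → ℝ) → ℝ // Measurable g ∧ ∀ x, g x = 0 ∨ g x = 1},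
          (μ {p | g.1 p.1 ≠ p.2}).toReal))) := by
  classical
  haveI hProb : IsProbabilityMeasure μ := by
    rw [← hμ 0]; exact Measure.isProbabilityMeasure_map (hmeas 0).aemeasurable
  have hae : ∀ᵐ p ∂μ, p.2 = 0 ∨ p.2 = 1 := by
    rw [← hμ 0]
    have hms : MeasurableSet {p : (Fin d → ℝ) × ℝ | p.2 = 0 ∨ p.2 = 1} :=
      (measurable_snd (measurableSet_singleton (0:ℝ))).union
        (measurable_snd (measurableSet_singleton (1:ℝ)))
    rw [ae_map_iff (hmeas 0).aemeasurable hms]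
    exact ae_of_all _ fun ω => hY 0 ω
  -- integrability of losses
  have hloss_int : ∀ β : (Fin d → ℝ) → ℝ, Measurable β → (∀ x, β x ∈ Set.Icc (0:ℝ) 1) →
      Integrable (fun p : (Fin d → ℝ) × ℝ => (β p.1 - p.2)^2) μ := by
    intro β hβm hβ01
    refine integrable_of_bound μ
      (((hβm.comp measurable_fst).sub measurable_snd).pow_const 2).aestronglyMeasurable 1
      (hae.mono fun p hp => ?_)
    rw [abs_of_nonneg (sq_nonneg _)]
    exact loss_le_one (hβ01 p.1) hp
  -- Lipschitz property of the risk
  have hRdiff : ∀ β γ : (Fin d → ℝ) → ℝ, Measurable β → (∀ x, β x ∈ Set.Icc (0:ℝ) 1) →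
      Measurable γ → (∀ x, γ x ∈ Set.Icc (0:ℝ) 1) → ∀ δ : ℝ, 0 ≤ δ →
      (∀ x, |β x - γ x| ≤ δ) →
      |(∫ p, (β p.1 - p.2)^2 ∂μ) - ∫ p, (γ p.1 - p.2)^2 ∂μ| ≤ 2*δ := by
    intro β γ hβm hβ01 hγm hγ01 δ hδ hclose
    have i1 := hloss_int β hβm hβ01
    have i2 := hloss_int γ hγm hγ01
    rw [← integral_sub i1 i2]
    calc |∫ p, ((β p.1 - p.2)^2 - (γ p.1 - p.2)^2) ∂μ|
        ≤ ∫ p, |(β p.1 - p.2)^2 - (γ p.1 - p.2)^2| ∂μ := by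
          simpa [Real.norm_eq_abs] using
            norm_integral_le_integral_norm (μ := μ)
              (fun p : (Fin d → ℝ) × ℝ => (β p.1 - p.2)^2 - (γ p.1 - p.2)^2)
      _ ≤ ∫ _p, 2*δ ∂μ := by
          refine integral_mono_ae (i1.sub i2).abs (integrable_const _)
            (hae.mono fun p hp => ?_)
          calc |(β p.1 - p.2)^2 - (γ p.1 - p.2)^2| ≤ 2 * |β p.1 - γ p.1| :=
                loss_lip (hβ01 p.1) (hγ01 p.1) hp
            _ ≤ 2*δ := by linarith [hclose p.1]
      _ = 2*δ := by simp [measure_univ]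
  -- nonemptiness
  have hΩne : Nonempty Ω := by
    by_contra h
    rw [not_nonempty_iff] at h
    have h1 : (ℙ : Measure Ω) Set.univ = 1 := measure_univ
    rw [Set.univ_eq_empty_iff.2 h, measure_empty] at h1
    exact one_ne_zero h1.symm
  haveI h𝔅ne : Nonempty 𝔅 := ⟨⟨βn 0 (Classical.choice hΩne), hβn_mem 0 _⟩⟩
  -- bddBelow of the risks over 𝔅
  have hIbdd : BddBelow (Set.range fun β : 𝔅 => ∫ p, (β.1 p.1 - p.2)^2 ∂μ) := by
    refine ⟨0, ?_⟩
    rintro r ⟨β, rfl⟩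
    exact integral_nonneg fun p => sq_nonneg _
  -- covering nets
  choose F hFsub hFcov using fun k : ℕ => h𝔅tb (1/((k:ℝ)+1)) (by positivity)
  -- a.s. SLLN event over countable net
  have hAS : ∀ᵐ ω ∂ℙ, ∀ k : ℕ, ∀ γ ∈ F k,
      Tendsto (fun n : ℕ => (1/(n:ℝ)) * ∑ i ∈ Finset.range n, (γ (X i ω) - Y i ω)^2)
        atTop (nhds (∫ p, (γ p.1 - p.2)^2 ∂μ)) := by
    rw [ae_all_iff]
    intro k
    have := (ae_ball_iff ((F k).countable_toSet)).2
      (fun γ (hγ : γ ∈ (F k : Set _)) =>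
        slln_risk X Y hmeas hiid μ hμ hY γ (h𝔅meas γ (hFsub k hγ)) (h𝔅01 γ (hFsub k hγ)))
    exact this.mono fun ω h γ hγ => h γ (Finset.mem_coe.2 hγ)
  have hpart1 : ∀ᵐ ω ∂ℙ, Tendsto (fun n => ∫ p, (βn n ω p.1 - p.2) ^ 2 ∂μ) atTop
      (nhds (⨅ β : 𝔅, ∫ p, (β.1 p.1 - p.2) ^ 2 ∂μ)) := by
    filter_upwards [hAS] with ω hω
    rw [Metric.tendsto_atTop]
    intro ε hε
    obtain ⟨k, hk⟩ := exists_nat_one_div_lt (show (0:ℝ) < ε/12 by linarith)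
    have hδpos : (0:ℝ) < 1/((k:ℝ)+1) := by positivity
    set δ : ℝ := 1/((k:ℝ)+1) with hδdef
    have hev : ∀ᶠ n : ℕ in atTop, ∀ γ ∈ F k,
        |(1/(n:ℝ)) * ∑ i ∈ Finset.range n, (γ (X i ω) - Y i ω)^2
          - ∫ p, (γ p.1 - p.2)^2 ∂μ| ≤ δ := by
      rw [eventually_all_finset]
      intro γ hγ
      obtain ⟨N0, hN0⟩ := Metric.tendsto_atTop.1 (hω k γ hγ) δ hδpos
      exact eventually_atTop.2 ⟨N0, fun n hn => le_of_lt (by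
        have := hN0 n hn; rwa [Real.dist_eq] at this)⟩
    obtain ⟨N, hN⟩ := eventually_atTop.1 hev
    refine ⟨N, fun n hn => ?_⟩
    -- uniform deviation bound for every β ∈ 𝔅
    have hub : ∀ β ∈ 𝔅,
        |(1/(n:ℝ)) * ∑ i ∈ Finset.range n, (β (X i ω) - Y i ω)^2
          - ∫ p, (β p.1 - p.2)^2 ∂μ| ≤ 5*δ := by
      intro β hβ
      obtain ⟨γ, hγF, hcl⟩ := hFcov k β hβ
      have hγ𝔅 := hFsub k hγF
      have hemp : |(1/(n:ℝ)) * ∑ i ∈ Finset.range n, (β (X i ω) - Y i ω)^2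
          - (1/(n:ℝ)) * ∑ i ∈ Finset.range n, (γ (X i ω) - Y i ω)^2| ≤ 2*δ := by
        refine avg_lip (fun i _ => ?_) (by linarith)
        calc |(β (X i ω) - Y i ω)^2 - (γ (X i ω) - Y i ω)^2|
            ≤ 2 * |β (X i ω) - γ (X i ω)| :=
              loss_lip (h𝔅01 β hβ _) (h𝔅01 γ hγ𝔅 _) (hY i ω)
          _ ≤ 2*δ := by linarith [hcl (X i ω)]
      have hrisk : |(∫ p, (γ p.1 - p.2)^2 ∂μ) - ∫ p, (β p.1 - p.2)^2 ∂μ| ≤ 2*δ :=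
        hRdiff γ β (h𝔅meas γ hγ𝔅) (h𝔅01 γ hγ𝔅) (h𝔅meas β hβ) (h𝔅01 β hβ) δ
          (le_of_lt hδpos) (fun x => by rw [abs_sub_comm]; exact hcl x)
      have hmid := hN n hn γ hγF
      calc |(1/(n:ℝ)) * ∑ i ∈ Finset.range n, (β (X i ω) - Y i ω)^2
            - ∫ p, (β p.1 - p.2)^2 ∂μ|
          ≤ |(1/(n:ℝ)) * ∑ i ∈ Finset.range n, (β (X i ω) - Y i ω)^2
              - (1/(n:ℝ)) * ∑ i ∈ Finset.range n, (γ (X i ω) - Y i ω)^2|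
            + |(1/(n:ℝ)) * ∑ i ∈ Finset.range n, (γ (X i ω) - Y i ω)^2
              - ∫ p, (γ p.1 - p.2)^2 ∂μ|
            + |(∫ p, (γ p.1 - p.2)^2 ∂μ) - ∫ p, (β p.1 - p.2)^2 ∂μ| := by
              have := abs_sub_le ((1/(n:ℝ)) * ∑ i ∈ Finset.range n, (β (X i ω) - Y i ω)^2)
                ((1/(n:ℝ)) * ∑ i ∈ Finset.range n, (γ (X i ω) - Y i ω)^2)
                (∫ p, (β p.1 - p.2)^2 ∂μ)
              have h2 := abs_sub_le ((1/(n:ℝ)) * ∑ i ∈ Finset.range n, (γ (X i ω) - Y i ω)^2)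
                (∫ p, (γ p.1 - p.2)^2 ∂μ) (∫ p, (β p.1 - p.2)^2 ∂μ)
              linarith
        _ ≤ 2*δ + δ + 2*δ := by linarith [hemp, hmid, hrisk]
        _ = 5*δ := by ring
    -- conclude
    set I := ⨅ β : 𝔅, ∫ p, (β.1 p.1 - p.2)^2 ∂μ with hIdef
    have hIle : I ≤ ∫ p, (βn n ω p.1 - p.2)^2 ∂μ :=
      ciInf_le hIbdd ⟨βn n ω, hβn_mem n ω⟩
    have hle : ∫ p, (βn n ω p.1 - p.2)^2 ∂μ ≤ I + 10*δ := by
      have h1 : ∀ β : 𝔅, (∫ p, (βn n ω p.1 - p.2)^2 ∂μ) - 10*δ ≤ ∫ p, (β.1 p.1 - p.2)^2 ∂μ := by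
        rintro ⟨β, hβ⟩
        have ha := hub (βn n ω) (hβn_mem n ω)
        have hb := hub β hβ
        have hc := hβn_min n ω β hβ
        have ha' := abs_le.1 ha
        have hb' := abs_le.1 hb
        simp only
        linarith [ha'.1, ha'.2, hb'.1, hb'.2]
      have := le_ciInf h1
      linarith [this]
    rw [Real.dist_eq, abs_of_nonneg (by linarith : (0:ℝ) ≤ (∫ p, (βn n ω p.1 - p.2)^2 ∂μ) - I)]
    have : (10:ℝ)*δ < ε := by
      have : δ < ε/12 := hk
      linarith
    linarith
  refine ⟨hpart1, fun hinf => ?_⟩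
  -- Part 2: the plug-in rule
  -- truncated regression function
  have hηb_meas : Measurable (fun x => max 0 (min 1 (η x))) :=
    measurable_const.max (measurable_const.min hη_meas)
  set ηb : (Fin d → ℝ) → ℝ := fun x => max 0 (min 1 (η x)) with hηbdef
  have hηb01 : ∀ x, ηb x ∈ Set.Icc (0:ℝ) 1 := fun x =>
    ⟨le_max_left _ _, max_le (by norm_num) (min_le_left _ _)⟩
  have hη01ae := eta_mem_Icc μ hae η hη_meas hη
  have hηbae : (fun p : (Fin d → ℝ) × ℝ => ηb p.1) =ᵐ[μ] fun p => η p.1 :=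
    hη01ae.mono fun p hp => by
      simp only [hηbdef]
      rw [min_eq_right hp.2, max_eq_right hp.1]
  have hηb_set : ∀ A : Set (Fin d → ℝ), MeasurableSet A →
      ∫ p in {p : (Fin d → ℝ) × ℝ | p.1 ∈ A}, p.2 ∂μ
        = ∫ p in {p : (Fin d → ℝ) × ℝ | p.1 ∈ A}, ηb p.1 ∂μ := fun A hA =>
    (hη A hA).trans (integral_congr_ae (ae_restrict_of_ae hηbae.symm))
  have hpull := pullout μ hae ηb hηb_meas hηb01 hηb_set
  -- risk decomposition
  have hdecomp : ∀ β : (Fin d → ℝ) → ℝ, Measurable β → (∀ x, β x ∈ Set.Icc (0:ℝ) 1) →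
      ∫ p, (β p.1 - p.2)^2 ∂μ
        = (∫ p, (β p.1 - ηb p.1)^2 ∂μ) + ∫ p, (ηb p.1 - p.2)^2 ∂μ := by
    intro β hβm hβ01
    have hgm : Measurable (fun x => β x - ηb x) := hβm.sub hηb_meas
    have hgb : ∀ x, |β x - ηb x| ≤ 1 := fun x => by
      have h1 := hβ01 x; have h2 := hηb01 x
      rw [abs_le]; constructor
      · linarith [h1.1, h2.2]
      · linarith [h1.2, h2.1]
    have hηbabs : ∀ x, |ηb x| ≤ 1 := fun x => by
      have := hηb01 x; rw [abs_le]; constructor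
      · linarith [this.1]
      · linarith [this.2]
    have hi1 : Integrable (fun p : (Fin d → ℝ) × ℝ => (β p.1 - ηb p.1) * ηb p.1) μ := by
      refine integrable_of_bound μ ((hgm.comp measurable_fst).mul
        (hηb_meas.comp measurable_fst)).aestronglyMeasurable 1 (ae_of_all _ fun p => ?_)
      rw [abs_mul]
      calc |β p.1 - ηb p.1| * |ηb p.1| ≤ 1 * 1 :=
            mul_le_mul (hgb p.1) (hηbabs p.1) (abs_nonneg _) zero_le_one
        _ = 1 := one_mul 1
    have hi2 : Integrable (fun p : (Fin d → ℝ) × ℝ => (β p.1 - ηb p.1) * p.2) μ := by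
      refine integrable_of_bound μ ((hgm.comp measurable_fst).mul
        measurable_snd).aestronglyMeasurable 1 (hae.mono fun p hp => ?_)
      rw [abs_mul]
      have hy : |p.2| ≤ 1 := by rcases hp with h | h <;> rw [h] <;> norm_num
      calc |β p.1 - ηb p.1| * |p.2| ≤ 1 * 1 :=
            mul_le_mul (hgb p.1) hy (abs_nonneg _) zero_le_one
        _ = 1 := one_mul 1
    have hcross : ∫ p, (β p.1 - ηb p.1) * (ηb p.1 - p.2) ∂μ = 0 := by
      have e : ∀ p : (Fin d → ℝ) × ℝ, (β p.1 - ηb p.1) * (ηb p.1 - p.2)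
          = (β p.1 - ηb p.1) * ηb p.1 - (β p.1 - ηb p.1) * p.2 := fun p => by ring
      rw [integral_congr_ae (ae_of_all _ e), integral_sub hi1 hi2]
      have hp : ∫ p, (β p.1 - ηb p.1) * p.2 ∂μ = ∫ p, (β p.1 - ηb p.1) * ηb p.1 ∂μ :=
        hpull (fun x => β x - ηb x) hgm 1 hgb
      rw [hp, sub_self]
    have hiA : Integrable (fun p : (Fin d → ℝ) × ℝ => (β p.1 - ηb p.1)^2) μ := by
      refine integrable_of_bound μ ((hgm.comp measurable_fst).pow_const 2).aestronglyMeasurable 1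
        (ae_of_all _ fun p => ?_)
      rw [abs_of_nonneg (sq_nonneg _), sq_le_one_iff_abs_le_one]
      exact hgb p.1
    have hiB : Integrable (fun p : (Fin d → ℝ) × ℝ => (ηb p.1 - p.2)^2) μ :=
      hloss_int ηb hηb_meas hηb01
    have hiC : Integrable (fun p : (Fin d → ℝ) × ℝ => (β p.1 - ηb p.1) * (ηb p.1 - p.2)) μ := by
      have he : (fun p : (Fin d → ℝ) × ℝ => (β p.1 - ηb p.1) * (ηb p.1 - p.2))
          = fun p => (β p.1 - ηb p.1) * ηb p.1 - (β p.1 - ηb p.1) * p.2 := by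
        funext p; ring
      rw [he]; exact hi1.sub hi2
    have e2 : ∀ p : (Fin d → ℝ) × ℝ, (β p.1 - p.2)^2
        = ((β p.1 - ηb p.1)^2 + (ηb p.1 - p.2)^2) + 2*((β p.1 - ηb p.1)*(ηb p.1 - p.2)) :=
      fun p => by ring
    have hiAB : Integrable (fun p : (Fin d → ℝ) × ℝ =>
        (β p.1 - ηb p.1)^2 + (ηb p.1 - p.2)^2) μ := hiA.add hiB
    have hiC2 : Integrable (fun p : (Fin d → ℝ) × ℝ =>
        2*((β p.1 - ηb p.1) * (ηb p.1 - p.2))) μ := hiC.const_mul 2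
    rw [integral_congr_ae (ae_of_all _ e2), integral_add hiAB hiC2,
      integral_add hiA hiB, integral_const_mul, hcross]
    ring
  -- transfer of ν-integrals
  have hDν : ∀ β : (Fin d → ℝ) → ℝ, Measurable β →
      ∫ x, (β x - η x)^2 ∂(μ.map Prod.fst) = ∫ p, (β p.1 - ηb p.1)^2 ∂μ := by
    intro β hβm
    rw [integral_map (f := fun x => (β x - η x)^2) measurable_fst.aemeasurable
      ((hβm.sub hη_meas).pow_const 2).aestronglyMeasurable]
    refine integral_congr_ae (hηbae.mono fun p hp => ?_)
    have hp' : ηb p.1 = η p.1 := hp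
    show (β p.1 - η p.1)^2 = (β p.1 - ηb p.1)^2
    rw [hp']
  -- the infimum risk equals the risk of ηb
  have hconst : (⨅ β : 𝔅, ∫ p, (β.1 p.1 - p.2) ^ 2 ∂μ) = ∫ p, (ηb p.1 - p.2)^2 ∂μ := by
    have h1 : ∀ β : 𝔅, ∫ p, (β.1 p.1 - p.2)^2 ∂μ
        = (∫ p, (β.1 p.1 - ηb p.1)^2 ∂μ) + ∫ p, (ηb p.1 - p.2)^2 ∂μ := fun β =>
      hdecomp β.1 (h𝔅meas β.1 β.2) (h𝔅01 β.1 β.2)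
    apply le_antisymm
    · refine le_of_forall_pos_le_add fun ε hε => ?_
      have h0 : (⨅ β : 𝔅, ∫ x, (β.1 x - η x) ^ 2 ∂(μ.map Prod.fst)) < ε := by
        rw [hinf]; exact hε
      obtain ⟨β, hβ⟩ := exists_lt_of_ciInf_lt h0
      calc (⨅ β : 𝔅, ∫ p, (β.1 p.1 - p.2) ^ 2 ∂μ) ≤ ∫ p, (β.1 p.1 - p.2)^2 ∂μ :=
            ciInf_le hIbdd β
        _ = (∫ p, (β.1 p.1 - ηb p.1)^2 ∂μ) + ∫ p, (ηb p.1 - p.2)^2 ∂μ := h1 β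
        _ = (∫ x, (β.1 x - η x)^2 ∂(μ.map Prod.fst)) + ∫ p, (ηb p.1 - p.2)^2 ∂μ := by
            rw [hDν β.1 (h𝔅meas β.1 β.2)]
        _ ≤ (∫ p, (ηb p.1 - p.2)^2 ∂μ) + ε := by linarith [hβ]
    · refine le_ciInf fun β => ?_
      rw [h1 β]
      have h2 : 0 ≤ ∫ p, (β.1 p.1 - ηb p.1)^2 ∂μ := integral_nonneg fun p => sq_nonneg _
      linarith
  filter_upwards [hpart1] with ω hω
  rw [hconst] at hω
  -- L² distance to ηb tends to 0
  have hD0 : Tendsto (fun n => ∫ p, (βn n ω p.1 - ηb p.1)^2 ∂μ) atTop (nhds 0) := by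
    have h2 := hω.sub (tendsto_const_nhds (x := ∫ p, (ηb p.1 - p.2)^2 ∂μ))
    rw [sub_self] at h2
    have h3 : (fun n => (∫ p, (βn n ω p.1 - p.2) ^ 2 ∂μ) - ∫ p, (ηb p.1 - p.2)^2 ∂μ)
        = fun n => ∫ p, (βn n ω p.1 - ηb p.1)^2 ∂μ := by
      funext n
      rw [hdecomp (βn n ω) (h𝔅meas _ (hβn_mem n ω)) (h𝔅01 _ (hβn_mem n ω))]
      ring
    rwa [h3] at h2
  -- L¹ distance to ηb tends to 0
  have hgb : ∀ n x, |βn n ω x - ηb x| ≤ 1 := fun n x => by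
    have h1 := h𝔅01 _ (hβn_mem n ω) x; have h2 := hηb01 x
    rw [abs_le]; constructor
    · linarith [h1.1, h2.2]
    · linarith [h1.2, h2.1]
  have hmeasg : ∀ n, Measurable fun p : (Fin d → ℝ) × ℝ => βn n ω p.1 - ηb p.1 := fun n =>
    ((h𝔅meas _ (hβn_mem n ω)).comp measurable_fst).sub (hηb_meas.comp measurable_fst)
  have ha0 : ∀ n, 0 ≤ ∫ p, |βn n ω p.1 - ηb p.1| ∂μ := fun n =>
    integral_nonneg fun p => abs_nonneg _
  have hA0 : Tendsto (fun n => ∫ p, |βn n ω p.1 - ηb p.1| ∂μ) atTop (nhds 0) := by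
    have hcs : ∀ n, (∫ p, |βn n ω p.1 - ηb p.1| ∂μ)^2 ≤ ∫ p, (βn n ω p.1 - ηb p.1)^2 ∂μ :=
      fun n => cs_ineq μ (fun p => βn n ω p.1 - ηb p.1) (hmeasg n) (fun p => hgb n p.1)
    have hs : ∀ n, ∫ p, |βn n ω p.1 - ηb p.1| ∂μ
        ≤ Real.sqrt (∫ p, (βn n ω p.1 - ηb p.1)^2 ∂μ) := fun n => by
      have h := Real.sqrt_le_sqrt (hcs n)
      rwa [Real.sqrt_sq (ha0 n)] at h
    have h2 : Tendsto (fun n => Real.sqrt (∫ p, (βn n ω p.1 - ηb p.1)^2 ∂μ)) atTop (nhds 0) := by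
      have := (Real.continuous_sqrt.tendsto 0).comp hD0
      simpa [Function.comp_def] using this
    exact squeeze_zero ha0 hs h2
  -- error probability formula
  have hsplit : ∀ (g : (Fin d → ℝ) → ℝ), Measurable g → (∀ x, g x = 0 ∨ g x = 1) →
      (μ {p : (Fin d → ℝ) × ℝ | g p.1 ≠ p.2}).toReal
        = ∫ p, (g p.1 + ηb p.1 - 2*(g p.1 * ηb p.1)) ∂μ := by
    intro g hg hg01
    have hg1 : ∀ x, |g x| ≤ 1 := fun x => by rcases hg01 x with h | h <;> rw [h] <;> norm_num
    have hηbabs : ∀ x, |ηb x| ≤ 1 := fun x => by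
      have := hηb01 x; rw [abs_le]; constructor
      · linarith [this.1]
      · linarith [this.2]
    have hsm : MeasurableSet {p : (Fin d → ℝ) × ℝ | g p.1 = p.2} :=
      measurableSet_eq_fun (hg.comp measurable_fst) measurable_snd
    have hsm' : MeasurableSet {p : (Fin d → ℝ) × ℝ | g p.1 ≠ p.2} := hsm.compl
    have hig : Integrable (fun p : (Fin d → ℝ) × ℝ => g p.1) μ :=
      integrable_of_bound μ (hg.comp measurable_fst).aestronglyMeasurable 1
        (ae_of_all _ fun p => hg1 p.1)
    have hiy : Integrable (fun p : (Fin d → ℝ) × ℝ => p.2) μ :=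
      integrable_of_bound μ measurable_snd.aestronglyMeasurable 1
        (hae.mono fun p hp => by rcases hp with h | h <;> rw [h] <;> norm_num)
    have higy : Integrable (fun p : (Fin d → ℝ) × ℝ => g p.1 * p.2) μ :=
      integrable_of_bound μ ((hg.comp measurable_fst).mul measurable_snd).aestronglyMeasurable 1
        (hae.mono fun p hp => by
          rw [abs_mul]
          have hy : |p.2| ≤ 1 := by rcases hp with h | h <;> rw [h] <;> norm_num
          calc |g p.1| * |p.2| ≤ 1*1 := mul_le_mul (hg1 p.1) hy (abs_nonneg _) zero_le_one
            _ = 1 := one_mul 1)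
    have hiηb : Integrable (fun p : (Fin d → ℝ) × ℝ => ηb p.1) μ :=
      integrable_of_bound μ (hηb_meas.comp measurable_fst).aestronglyMeasurable 1
        (ae_of_all _ fun p => hηbabs p.1)
    have higηb : Integrable (fun p : (Fin d → ℝ) × ℝ => g p.1 * ηb p.1) μ :=
      integrable_of_bound μ ((hg.comp measurable_fst).mul
        (hηb_meas.comp measurable_fst)).aestronglyMeasurable 1
        (ae_of_all _ fun p => by
          rw [abs_mul]
          calc |g p.1| * |ηb p.1| ≤ 1*1 :=
                mul_le_mul (hg1 p.1) (hηbabs p.1) (abs_nonneg _) zero_le_one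
            _ = 1 := one_mul 1)
    have h1 : (μ {p : (Fin d → ℝ) × ℝ | g p.1 ≠ p.2}).toReal
        = ∫ p, Set.indicator {p : (Fin d → ℝ) × ℝ | g p.1 ≠ p.2} (fun _ => (1:ℝ)) p ∂μ := by
      rw [integral_indicator_const (1:ℝ) hsm', smul_eq_mul, mul_one, measureReal_def]
    have h2 : ∫ p, Set.indicator {p : (Fin d → ℝ) × ℝ | g p.1 ≠ p.2} (fun _ => (1:ℝ)) p ∂μ
        = ∫ p, (g p.1 + p.2 - 2*(g p.1 * p.2)) ∂μ := by
      refine integral_congr_ae (hae.mono fun p hp => ?_)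
      rcases hp with hy | hy <;> rcases hg01 p.1 with hgp | hgp <;>
        simp [Set.indicator_apply, Set.mem_setOf_eq, hy, hgp] <;> norm_num
    have h3 : ∫ p, (g p.1 + p.2 - 2*(g p.1 * p.2)) ∂μ
        = (∫ p, g p.1 ∂μ) + (∫ p, p.2 ∂μ) - 2 * ∫ p, g p.1 * p.2 ∂μ := by
      have ha1 : Integrable (fun p : (Fin d → ℝ) × ℝ => g p.1 + p.2) μ := hig.add hiy
      have ha2 : Integrable (fun p : (Fin d → ℝ) × ℝ => 2*(g p.1 * p.2)) μ := higy.const_mul 2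
      rw [integral_sub ha1 ha2, integral_add hig hiy, integral_const_mul]
    have h4 : ∫ p, (g p.1 + ηb p.1 - 2*(g p.1 * ηb p.1)) ∂μ
        = (∫ p, g p.1 ∂μ) + (∫ p, ηb p.1 ∂μ) - 2 * ∫ p, g p.1 * ηb p.1 ∂μ := by
      have hb1 : Integrable (fun p : (Fin d → ℝ) × ℝ => g p.1 + ηb p.1) μ := hig.add hiηb
      have hb2 : Integrable (fun p : (Fin d → ℝ) × ℝ => 2*(g p.1 * ηb p.1)) μ := higηb.const_mul 2
      rw [integral_sub hb1 hb2, integral_add hig hiηb, integral_const_mul]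
    have h5 : ∫ p, p.2 ∂μ = ∫ p, ηb p.1 ∂μ := by
      have h := hpull (fun _ => (1:ℝ)) measurable_const 1 (fun x => by norm_num)
      simpa using h
    have h6 : ∫ p, g p.1 * p.2 ∂μ = ∫ p, g p.1 * ηb p.1 ∂μ := hpull g hg 1 hg1
    rw [h1, h2, h3, h5, h6, ← h4]
  -- the Bayes classifier
  have hgstar_meas : Measurable (fun x => if 1/2 < ηb x then (1:ℝ) else 0) :=
    Measurable.ite (measurableSet_lt measurable_const hηb_meas) measurable_const measurable_const
  have hgstar01 : ∀ x, (if 1/2 < ηb x then (1:ℝ) else 0) = 0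
      ∨ (if 1/2 < ηb x then (1:ℝ) else 0) = 1 := fun x => by split_ifs <;> simp
  have hgstar1 : ∀ x, |if 1/2 < ηb x then (1:ℝ) else 0| ≤ 1 := fun x => by
    split_ifs <;> norm_num
  -- integrability of the ℓ-integrands
  have hℓint : ∀ (g : (Fin d → ℝ) → ℝ), Measurable g → (∀ x, |g x| ≤ 1) →
      Integrable (fun p : (Fin d → ℝ) × ℝ => g p.1 + ηb p.1 - 2*(g p.1 * ηb p.1)) μ := by
    intro g hg hg1
    refine integrable_of_bound μ (((hg.comp measurable_fst).add
      (hηb_meas.comp measurable_fst)).sub (((hg.comp measurable_fst).mul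
      (hηb_meas.comp measurable_fst)).const_mul 2)).aestronglyMeasurable 4
      (ae_of_all _ fun p => ?_)
    have h1 := abs_le.1 (hg1 p.1)
    have h2 := hηb01 p.1
    rw [abs_le]; constructor <;> nlinarith [h1.1, h1.2, h2.1, h2.2]
  have hdiff : ∀ (g : (Fin d → ℝ) → ℝ), Measurable g → (∀ x, |g x| ≤ 1) →
      (∫ p, (g p.1 + ηb p.1 - 2*(g p.1 * ηb p.1)) ∂μ)
        - (∫ p, ((if 1/2 < ηb p.1 then (1:ℝ) else 0) + ηb p.1
            - 2*((if 1/2 < ηb p.1 then (1:ℝ) else 0) * ηb p.1)) ∂μ)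
        = ∫ p, (g p.1 - (if 1/2 < ηb p.1 then (1:ℝ) else 0)) * (1 - 2*ηb p.1) ∂μ := by
    intro g hg hg1
    rw [← integral_sub (hℓint g hg hg1) (hℓint _ hgstar_meas hgstar1)]
    refine integral_congr_ae (ae_of_all _ fun p => ?_)
    ring
  have hstar_le : ∀ (g : (Fin d → ℝ) → ℝ), Measurable g → (∀ x, g x = 0 ∨ g x = 1) →
      (∫ p, ((if 1/2 < ηb p.1 then (1:ℝ) else 0) + ηb p.1
          - 2*((if 1/2 < ηb p.1 then (1:ℝ) else 0) * ηb p.1)) ∂μ)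
        ≤ ∫ p, (g p.1 + ηb p.1 - 2*(g p.1 * ηb p.1)) ∂μ := by
    intro g hg hg01
    have hg1 : ∀ x, |g x| ≤ 1 := fun x => by rcases hg01 x with h | h <;> rw [h] <;> norm_num
    have h := hdiff g hg hg1
    have hnn : 0 ≤ ∫ p, (g p.1 - (if 1/2 < ηb p.1 then (1:ℝ) else 0)) * (1 - 2*ηb p.1) ∂μ := by
      refine integral_nonneg fun p => ?_
      show (0:ℝ) ≤ (g p.1 - (if 1/2 < ηb p.1 then (1:ℝ) else 0)) * (1 - 2*ηb p.1)
      by_cases hb : 1/2 < ηb p.1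
      · rw [if_pos hb]
        rcases hg01 p.1 with hgp | hgp <;> rw [hgp] <;> nlinarith [(hηb01 p.1).2]
      · rw [if_neg hb]
        rw [not_lt] at hb
        rcases hg01 p.1 with hgp | hgp <;> rw [hgp] <;> nlinarith [(hηb01 p.1).1]
    linarith
  have hLbdd : BddBelow (Set.range
      fun g : {g : (Fin d → ℝ) → ℝ // Measurable g ∧ ∀ x, g x = 0 ∨ g x = 1} =>
        (μ {p | g.1 p.1 ≠ p.2}).toReal) := by
    refine ⟨0, ?_⟩; rintro r ⟨g, rfl⟩; exact ENNReal.toReal_nonneg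
  have hBayes : (⨅ g : {g : (Fin d → ℝ) → ℝ // Measurable g ∧ ∀ x, g x = 0 ∨ g x = 1},
      (μ {p | g.1 p.1 ≠ p.2}).toReal)
      = ∫ p, ((if 1/2 < ηb p.1 then (1:ℝ) else 0) + ηb p.1
          - 2*((if 1/2 < ηb p.1 then (1:ℝ) else 0) * ηb p.1)) ∂μ := by
    apply le_antisymm
    · have h1 := ciInf_le hLbdd
        (⟨fun x => if 1/2 < ηb x then (1:ℝ) else 0, hgstar_meas, hgstar01⟩ :
          {g : (Fin d → ℝ) → ℝ // Measurable g ∧ ∀ x, g x = 0 ∨ g x = 1})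
      exact h1.trans (le_of_eq (hsplit _ hgstar_meas hgstar01))
    · haveI : Nonempty {g : (Fin d → ℝ) → ℝ // Measurable g ∧ ∀ x, g x = 0 ∨ g x = 1} :=
        ⟨⟨fun _ => 0, measurable_const, fun _ => Or.inl rfl⟩⟩
      refine le_ciInf fun g => ?_
      rw [hsplit g.1 g.2.1 g.2.2]
      exact hstar_le g.1 g.2.1 g.2.2
  -- plug-in classifiers
  have hgn_meas : ∀ n, Measurable (fun x => if 1/2 < βn n ω x then (1:ℝ) else 0) := fun n =>
    Measurable.ite (measurableSet_lt measurable_const (h𝔅meas _ (hβn_mem n ω)))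
      measurable_const measurable_const
  have hgn01 : ∀ n x, (if 1/2 < βn n ω x then (1:ℝ) else 0) = 0
      ∨ (if 1/2 < βn n ω x then (1:ℝ) else 0) = 1 := fun n x => by split_ifs <;> simp
  have hgn1 : ∀ n x, |if 1/2 < βn n ω x then (1:ℝ) else 0| ≤ 1 := fun n x => by
    split_ifs <;> norm_num
  have habs_int : ∀ n, Integrable (fun p : (Fin d → ℝ) × ℝ => |βn n ω p.1 - ηb p.1|) μ :=
    fun n => integrable_of_bound μ (hmeasg n).abs.aestronglyMeasurable 1
      (ae_of_all _ fun p => by rw [abs_abs]; exact hgb n p.1)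
  have hplug : ∀ n, (μ {p : (Fin d → ℝ) × ℝ |
        (if 1 / 2 < βn n ω p.1 then (1:ℝ) else 0) ≠ p.2}).toReal
      - (∫ p, ((if 1/2 < ηb p.1 then (1:ℝ) else 0) + ηb p.1
          - 2*((if 1/2 < ηb p.1 then (1:ℝ) else 0) * ηb p.1)) ∂μ)
      ≤ 2 * ∫ p, |βn n ω p.1 - ηb p.1| ∂μ := by
    intro n
    rw [hsplit _ (hgn_meas n) (hgn01 n), hdiff _ (hgn_meas n) (hgn1 n)]
    have hint1 : Integrable (fun p : (Fin d → ℝ) × ℝ =>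
        ((if 1/2 < βn n ω p.1 then (1:ℝ) else 0) - (if 1/2 < ηb p.1 then (1:ℝ) else 0))
          * (1 - 2*ηb p.1)) μ := by
      refine integrable_of_bound μ ((((hgn_meas n).comp measurable_fst).sub
        (hgstar_meas.comp measurable_fst)).mul (measurable_const.sub
        ((hηb_meas.comp measurable_fst).const_mul 2))).aestronglyMeasurable 2
        (ae_of_all _ fun p => ?_)
      rw [abs_mul]
      have hb1 : |(if 1/2 < βn n ω p.1 then (1:ℝ) else 0)
          - (if 1/2 < ηb p.1 then (1:ℝ) else 0)| ≤ 2 := by split_ifs <;> norm_num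
      have hb2 : |1 - 2*ηb p.1| ≤ 1 := by
        rw [abs_le]; have := hηb01 p.1; constructor
        · linarith [this.2]
        · linarith [this.1]
      calc |(if 1/2 < βn n ω p.1 then (1:ℝ) else 0) - (if 1/2 < ηb p.1 then (1:ℝ) else 0)|
            * |1 - 2*ηb p.1| ≤ 2*1 := mul_le_mul hb1 hb2 (abs_nonneg _) (by norm_num)
        _ = 2 := by norm_num
    have hint2 : Integrable (fun p : (Fin d → ℝ) × ℝ => 2 * |βn n ω p.1 - ηb p.1|) μ :=
      (habs_int n).const_mul 2
    have hmono : ∫ p, ((if 1/2 < βn n ω p.1 then (1:ℝ) else 0)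
          - (if 1/2 < ηb p.1 then (1:ℝ) else 0)) * (1 - 2*ηb p.1) ∂μ
        ≤ ∫ p, 2 * |βn n ω p.1 - ηb p.1| ∂μ := by
      refine integral_mono hint1 hint2 fun p => ?_
      show ((if 1/2 < βn n ω p.1 then (1:ℝ) else 0) - (if 1/2 < ηb p.1 then (1:ℝ) else 0))
          * (1 - 2*ηb p.1) ≤ 2 * |βn n ω p.1 - ηb p.1|
      by_cases h1 : 1/2 < βn n ω p.1 <;> by_cases h2 : 1/2 < ηb p.1
      · rw [if_pos h1, if_pos h2]
        simp only [sub_self, zero_mul]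
        positivity
      · rw [if_pos h1, if_neg h2]
        rw [not_lt] at h2
        nlinarith [le_abs_self (βn n ω p.1 - ηb p.1)]
      · rw [if_neg h1, if_pos h2]
        rw [not_lt] at h1
        nlinarith [neg_abs_le (βn n ω p.1 - ηb p.1)]
      · rw [if_neg h1, if_neg h2]
        simp only [sub_self, zero_mul]
        positivity
    calc ∫ p, ((if 1/2 < βn n ω p.1 then (1:ℝ) else 0)
          - (if 1/2 < ηb p.1 then (1:ℝ) else 0)) * (1 - 2*ηb p.1) ∂μ
        ≤ ∫ p, 2 * |βn n ω p.1 - ηb p.1| ∂μ := hmono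
      _ = 2 * ∫ p, |βn n ω p.1 - ηb p.1| ∂μ := integral_const_mul 2 _
  rw [hBayes, ← tendsto_sub_nhds_zero_iff]
  refine squeeze_zero (fun n => ?_) (fun n => hplug n) ?_
  · rw [hsplit _ (hgn_meas n) (hgn01 n)]
    have h := hstar_le _ (hgn_meas n) (hgn01 n)
    linarith
  · have h := hA0.const_mul 2
    simpa using h
end

section
/- Let H_0 ∈ ℝ^{N_0 × L}, H_1 ∈ ℝ^{N_1 × L}, …, H_k ∈ ℝ^{N_k × L} be hidden layer matrices of sequentially arriving data blocks with corresponding target blocks T_0 ∈ ℝ^{N_0 × m}, …, T_k ∈ ℝ^{N_k × m}, and suppose K_0 := H_0ᵀH_0 is invertible. Define recursively β_0 = K_0^{-1} H_0ᵀ T_0, and for j = 1,…,k: K_j = K_{j-1} + H_jᵀ H_j and β_j = β_{j-1} + K_j^{-1} H_jᵀ (T_j − H_j β_{j-1}). Then each K_j is invertible, and β_k = (Σ_{i=0}^{k} H_iᵀ H_i)^{-1} (Σ_{i=0}^{k} H_iᵀ T_i); in particular, β_k is the unique minimizer over β ∈ ℝ^{L×m} of the cumulative squared error Σ_{i=0}^{k}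 ‖H_i β − T_i‖², i.e., the online sequential update computes exactly the batch least-squares solution over all data seen so far. -/
open Matrix
/-- The squared Frobenius norm of a real matrix. -/
noncomputable def frobSq {n m : Type*} [Fintype n] [Fintype m] (M : Matrix n m ℝ) : ℝ :=
  ∑ i, ∑ j, (M i j) ^ 2

section Aux

variable {a b c : Type*} [Fintype a] [Fintype b] [Fintype c]

/-- Frobenius inner product. -/
noncomputable def fip (A B : Matrix a b ℝ) : ℝ := ∑ i, ∑ j, A i j * B i j

lemma frobSq_eq_fip (A : Matrix a b ℝ) : frobSq A = fip A A := by
  simp [frobSq, fip, sq]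

lemma fip_eq_trace (A B : Matrix a b ℝ) : fip A B = (Aᵀ * B).trace := by
  simp only [fip, Matrix.trace, Matrix.diag, Matrix.mul_apply, Matrix.transpose_apply]
  exact Finset.sum_comm

lemma fip_mul_left (M : Matrix a b ℝ) (d : Matrix b c ℝ) (R : Matrix a c ℝ) :
    fip (M * d) R = fip d (Mᵀ * R) := by
  rw [fip_eq_trace, fip_eq_trace, Matrix.transpose_mul, Matrix.mul_assoc]

lemma fip_sum_right {ι : Type*} (s : Finset ι) (d : Matrix a b ℝ) (X : ι → Matrix a b ℝ) :
    ∑ i ∈ s, fip d (X i) = fip d (∑ i ∈ s, X i) := by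
  simp only [fip_eq_trace, Matrix.mul_sum, Matrix.trace_sum]

lemma fip_zero_right (d : Matrix a b ℝ) : fip d (0 : Matrix a b ℝ) = 0 := by
  simp [fip]

lemma frobSq_add (A B : Matrix a b ℝ) :
    frobSq (A + B) = frobSq A + 2 * fip A B + frobSq B := by
  have h : ∀ i j, (A i j + B i j) ^ 2
      = A i j ^ 2 + (2 * (A i j * B i j) + B i j ^ 2) := by intros; ring
  simp only [frobSq, fip, Matrix.add_apply, h, Finset.sum_add_distrib, Finset.mul_sum]
  ring

end Aux

/-- OS-ELM recursive least squares: the online sequential update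
`K_j = K_{j-1} + H_jᵀ H_j`, `β_j = β_{j-1} + K_j⁻¹ H_jᵀ (T_j − H_j β_{j-1})`, started from
an invertible `K_0 = H_0ᵀ H_0` and `β_0 = K_0⁻¹ H_0ᵀ T_0`, keeps every `K_j` invertible and
computes exactly the batch least-squares solution
`β_k = (Σ H_iᵀ H_i)⁻¹ (Σ H_iᵀ T_i)`, the unique minimizer of the cumulative squared
error `Σ_i ‖H_i β − T_i‖²`. -/
theorem oselm_sequential_equals_batch_least_squares
    {L m k : ℕ} {N : ℕ → ℕ}
    (H : ∀ i : ℕ, Matrix (Fin (N i)) (Fin L) ℝ)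
    (T : ∀ i : ℕ, Matrix (Fin (N i)) (Fin m) ℝ)
    (K : ℕ → Matrix (Fin L) (Fin L) ℝ)
    (β : ℕ → Matrix (Fin L) (Fin m) ℝ)
    (hK0 : K 0 = (H 0)ᵀ * H 0)
    (hK0_inv : IsUnit (K 0))
    (hβ0 : β 0 = (K 0)⁻¹ * (H 0)ᵀ * T 0)
    (hK : ∀ j < k, K (j + 1) = K j + (H (j + 1))ᵀ * H (j + 1))
    (hβ : ∀ j < k, β (j + 1) = β j + (K (j + 1))⁻¹ * (H (j + 1))ᵀ * (T (j + 1) - H (j + 1) * β j)) :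
    (∀ j ≤ k, IsUnit (K j)) ∧
    β k = (∑ i ∈ Finset.range (k + 1), (H i)ᵀ * H i)⁻¹ *
        ∑ i ∈ Finset.range (k + 1), (H i)ᵀ * T i ∧
    ∀ b : Matrix (Fin L) (Fin m) ℝ, b ≠ β k →
      ∑ i ∈ Finset.range (k + 1), frobSq (H i * β k - T i) <
        ∑ i ∈ Finset.range (k + 1), frobSq (H i * b - T i) := by
  have hHpsd : ∀ i, ((H i)ᵀ * H i).PosSemidef := fun i => by
    simpa [Matrix.conjTranspose_eq_transpose_of_trivial] using
      Matrix.posSemidef_conjTranspose_mul_self (H i)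
  -- K 0 is positive definite
  have hK0pd : (K 0).PosDef := by
    have hpsd : (K 0).PosSemidef := hK0 ▸ hHpsd 0
    refine .of_dotProduct_mulVec_pos hpsd.1 (fun x hx => ?_)
    rcases lt_or_eq_of_le (hpsd.dotProduct_mulVec_nonneg x) with h | h
    · exact h
    · exfalso
      have h0 : K 0 *ᵥ x = 0 := (hpsd.dotProduct_mulVec_zero_iff x).1 h.symm
      have hinj := Matrix.mulVec_injective_iff_isUnit.mpr hK0_inv
      exact hx (hinj (by simpa using h0))
  -- positive definiteness of all K j
  have hKpd : ∀ j ≤ k, (K j).PosDef := by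
    intro j
    induction j with
    | zero => exact fun _ => hK0pd
    | succ n ih =>
      intro hle
      rw [hK n (by omega)]
      exact (ih (by omega)).add_posSemidef (hHpsd (n + 1))
  have hKunit : ∀ j ≤ k, IsUnit (K j) := fun j hj => (hKpd j hj).isUnit
  -- K j is the cumulative Gram matrix
  have hKsum : ∀ j ≤ k, K j = ∑ i ∈ Finset.range (j + 1), (H i)ᵀ * H i := by
    intro j
    induction j with
    | zero => intro _; simpa using hK0
    | succ n ih =>
      intro hle
      rw [Finset.sum_range_succ, hK n (by omega), ih (by omega)]
  -- normal equations hold at each step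
  have hS : ∀ j ≤ k, K j * β j = ∑ i ∈ Finset.range (j + 1), (H i)ᵀ * T i := by
    intro j
    induction j with
    | zero =>
      intro _
      rw [hβ0, ← Matrix.mul_assoc, ← Matrix.mul_assoc,
        Matrix.mul_nonsing_inv _ ((Matrix.isUnit_iff_isUnit_det _).mp hK0_inv),
        Matrix.one_mul]
      simp
    | succ n ih =>
      intro hle
      have hdet : IsUnit (K (n + 1)).det :=
        (Matrix.isUnit_iff_isUnit_det _).mp (hKunit (n + 1) (by omega))
      have h1 : K (n + 1) * ((K (n + 1))⁻¹ * (H (n + 1))ᵀ * (T (n + 1) - H (n + 1) * β n))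
          = (H (n + 1))ᵀ * (T (n + 1) - H (n + 1) * β n) := by
        rw [← Matrix.mul_assoc, ← Matrix.mul_assoc, Matrix.mul_nonsing_inv _ hdet,
          Matrix.one_mul]
      rw [hβ n (by omega), Matrix.mul_add, h1, Finset.sum_range_succ, ← ih (by omega)]
      rw [hK n (by omega), Matrix.add_mul, Matrix.mul_sub]
      simp only [Matrix.mul_assoc]
      abel
  have hKdet : IsUnit (K k).det := (Matrix.isUnit_iff_isUnit_det _).mp (hKunit k le_rfl)
  have hβk : β k = (∑ i ∈ Finset.range (k + 1), (H i)ᵀ * H i)⁻¹ *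
      ∑ i ∈ Finset.range (k + 1), (H i)ᵀ * T i := by
    rw [← hKsum k le_rfl, ← hS k le_rfl, Matrix.nonsing_inv_mul_cancel_left _ _ hKdet]
  refine ⟨hKunit, hβk, ?_⟩
  -- minimization
  intro b hb
  set d : Matrix (Fin L) (Fin m) ℝ := b - β k with hd
  have hd0 : d ≠ 0 := sub_ne_zero.mpr hb
  have hrw : ∀ i, H i * b - T i = (H i * β k - T i) + H i * d := by
    intro i
    rw [hd, Matrix.mul_sub]
    abel
  -- residual orthogonality: ∑ Hᵀ(Hβ - T) = 0
  have hortho : ∑ i ∈ Finset.range (k + 1), (H i)ᵀ * (H i * β k - T i) = 0 := by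
    have : ∑ i ∈ Finset.range (k + 1), (H i)ᵀ * (H i * β k - T i)
        = (∑ i ∈ Finset.range (k + 1), (H i)ᵀ * H i) * β k
          - ∑ i ∈ Finset.range (k + 1), (H i)ᵀ * T i := by
      rw [Matrix.sum_mul, ← Finset.sum_sub_distrib]
      congr 1
      ext1 i
      rw [Matrix.mul_sub, Matrix.mul_assoc]
    rw [this, ← hKsum k le_rfl, hS k le_rfl, sub_self]
  -- cross term vanishes
  have hcross : ∑ i ∈ Finset.range (k + 1), fip (H i * β k - T i) (H i * d) = 0 := by
    have heach : ∀ i, fip (H i * β k - T i) (H i * d)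
        = fip d ((H i)ᵀ * (H i * β k - T i)) := by
      intro i
      rw [show fip (H i * β k - T i) (H i * d) = fip (H i * d) (H i * β k - T i) from by
        simp [fip, mul_comm], fip_mul_left]
    simp_rw [heach]
    rw [fip_sum_right, hortho, fip_zero_right]
  -- quadratic term is positive
  have hquad : 0 < ∑ i ∈ Finset.range (k + 1), frobSq (H i * d) := by
    have heach : ∀ i, frobSq (H i * d) = fip d (((H i)ᵀ * H i) * d) := by
      intro i
      rw [frobSq_eq_fip, fip_mul_left, Matrix.mul_assoc]
    simp_rw [heach]
    rw [fip_sum_right]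
    have hsum : ∑ i ∈ Finset.range (k + 1), ((H i)ᵀ * H i) * d
        = K k * d := by
      rw [hKsum k le_rfl, Matrix.sum_mul]
    rw [hsum]
    have hcol : fip d (K k * d)
        = ∑ j : Fin m, (fun c => d c j) ⬝ᵥ (K k *ᵥ fun c => d c j) := by
      simp only [fip, dotProduct, Matrix.mulVec, Matrix.mul_apply, dotProduct]
      exact Finset.sum_comm
    rw [hcol]
    have hpd := hKpd k le_rfl
    obtain ⟨c0, j0, hcj⟩ : ∃ c j, d c j ≠ 0 := by
      by_contra hcon
      push_neg at hcon
      exact hd0 (by ext c j; exact hcon c j)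
    refine Finset.sum_pos' (fun j _ => ?_) ⟨j0, Finset.mem_univ _, ?_⟩
    · have := hpd.posSemidef.dotProduct_mulVec_nonneg (fun c => d c j)
      simpa using this
    · have hne : (fun c => d c j0) ≠ 0 := by
        intro h
        exact hcj (congrFun h c0)
      have := hpd.dotProduct_mulVec_pos hne
      simpa using this
  -- combine
  have hexpand : ∑ i ∈ Finset.range (k + 1), frobSq (H i * b - T i)
      = ∑ i ∈ Finset.range (k + 1), frobSq (H i * β k - T i)
        + 2 * ∑ i ∈ Finset.range (k + 1), fip (H i * β k - T i) (H i * d)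
        + ∑ i ∈ Finset.range (k + 1), frobSq (H i * d) := by
    simp_rw [hrw, frobSq_add]
    rw [Finset.sum_add_distrib, Finset.sum_add_distrib, Finset.mul_sum]
  rw [hexpand, hcross]
  linarith
end

section
/- Let g : ℝ → ℝ be an activation function, A ∈ ℝ^{d×L}, b ∈ ℝ^L, and ΔA ∈ ℝ^{δ×L}; let X ∈ ℝ^{N×d} with zero-padded version X' = [X 0] ∈ ℝ^{N×(d+δ)} and augmented input weights A' = [A; ΔA] ∈ ℝ^{(d+δ)×L}; let T ∈ ℝ^{N×m_1} with zero-padded target T' = [T 0] ∈ ℝ^{N×(m_1+m_2)}. Write H = H(X, A, b). If HᵀH is invertible and β̂ = (HᵀH)^{-1}HᵀT is the least-squares output weight of the original network, then [β̂ 0] ∈ ℝ^{L×(m_1+m_2)} is the unique minimizer over β' ∈ ℝ^{L×(m_1+m_2)} of ‖H(X', A', b)β' − T'‖; that is, simultaneous attribute augmentation (virtual drift) and class augmentation (real drift) — hybrid drift — is solved by the same output weights padded with zero columns, without retraining on the old data. -/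
open Matrix

/-- The hidden layer matrix `H(X, A, b)` of an SLFN with activation `g`, input weights `A`,
biases `b`, on the data matrix `X`: `H i j = g ((X * A) i j + b j)`. -/
def hiddenH {N L : ℕ} {ι : Type*} [Fintype ι] (g : ℝ → ℝ)
    (X : Matrix (Fin N) ι ℝ) (A : Matrix ι (Fin L) ℝ) (b : Fin L → ℝ) :
    Matrix (Fin N) (Fin L) ℝ :=
  Matrix.of fun i j => g ((X * A) i j + b j)

lemma frobSq_nonneg {n m : Type*} [Fintype n] [Fintype m] (M : Matrix n m ℝ) :
    0 ≤ frobSq M := by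
  apply Finset.sum_nonneg; intro i _; apply Finset.sum_nonneg; intro j _; positivity

lemma frobSq_pos {n m : Type*} [Fintype n] [Fintype m] (M : Matrix n m ℝ) (h : M ≠ 0) :
    0 < frobSq M := by
  rcases lt_or_eq_of_le (frobSq_nonneg M) with h' | h'
  · exact h'
  exfalso; apply h
  ext i j
  have h2 : ∀ i ∈ Finset.univ, (0:ℝ) ≤ ∑ j, (M i j)^2 := by
    intro i _; apply Finset.sum_nonneg; intro j _; positivity
  have := (Finset.sum_eq_zero_iff_of_nonneg h2).mp h'.symm i (Finset.mem_univ i)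
  have h3 : ∀ j ∈ Finset.univ, (0:ℝ) ≤ (M i j)^2 := by intro j _; positivity
  have := (Finset.sum_eq_zero_iff_of_nonneg h3).mp this j (Finset.mem_univ j)
  simpa using pow_eq_zero_iff (n := 2) (by norm_num) |>.mp this

lemma ls_min {N L m : Type*} [Fintype N] [Fintype L] [Fintype m] [DecidableEq L]
    (H : Matrix N L ℝ) (T : Matrix N m ℝ) (hinv : IsUnit (Hᵀ * H))
    (β : Matrix L m ℝ) (hne : β ≠ (Hᵀ * H)⁻¹ * Hᵀ * T) :
    frobSq (H * ((Hᵀ * H)⁻¹ * Hᵀ * T) - T) < frobSq (H * β - T) := by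
  set βh := (Hᵀ * H)⁻¹ * Hᵀ * T with hβh
  have hdet : IsUnit (Hᵀ * H).det := (Matrix.isUnit_iff_isUnit_det _).mp hinv
  have hres : Hᵀ * (H * βh - T) = 0 := by
    rw [Matrix.mul_sub, hβh, ← Matrix.mul_assoc, ← Matrix.mul_assoc, ← Matrix.mul_assoc,
      Matrix.mul_nonsing_inv _ hdet, Matrix.one_mul, sub_self]
  set D := β - βh with hD
  have hDne : D ≠ 0 := fun h => hne (by rwa [hD, sub_eq_zero] at h)
  have hHD : H * D ≠ 0 := by
    intro h
    apply hDne
    have : Hᵀ * H * D = 0 := by rw [Matrix.mul_assoc, h, Matrix.mul_zero]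
    calc D = (Hᵀ * H)⁻¹ * (Hᵀ * H * D) := by
            rw [← Matrix.mul_assoc, Matrix.nonsing_inv_mul _ hdet, Matrix.one_mul]
      _ = 0 := by rw [this, Matrix.mul_zero]
  have hsplit : H * β - T = H * D + (H * βh - T) := by
    rw [hD, Matrix.mul_sub]; abel
  have hcross : ∑ i, ∑ j, (H * D) i j * (H * βh - T) i j = 0 := by
    have : ∑ i, ∑ j, (H * D) i j * (H * βh - T) i j
        = Matrix.trace ((H * D)ᵀ * (H * βh - T)) := by
      simp only [Matrix.trace, Matrix.diag, Matrix.mul_apply, Matrix.transpose_apply]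
      rw [Finset.sum_comm]
    rw [this, Matrix.transpose_mul, Matrix.mul_assoc, hres, Matrix.mul_zero,
      Matrix.trace_zero]
  have hexp : frobSq (H * β - T) = frobSq (H * D) + frobSq (H * βh - T) := by
    rw [hsplit]
    simp only [frobSq, Matrix.add_apply]
    rw [← Finset.sum_add_distrib]
    have : ∀ i, ∑ j, ((H * D) i j + (H * βh - T) i j) ^ 2
        = (∑ j, ((H * D) i j)^2 + ∑ j, ((H * βh - T) i j)^2)
          + 2 * ∑ j, (H * D) i j * (H * βh - T) i j := by
      intro i
      rw [Finset.mul_sum, ← Finset.sum_add_distrib, ← Finset.sum_add_distrib]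
      congr 1; ext j; ring
    rw [Finset.sum_congr rfl (fun i _ => this i), Finset.sum_add_distrib,
      ← Finset.mul_sum, hcross, mul_zero, add_zero]
  rw [hexp]
  linarith [frobSq_pos (H * D) hHD]

/-- Hybrid-drift handling in AOS-ELM: under simultaneous attribute augmentation
(virtual drift: `δ` new attributes handled by new input-weight rows `ΔA`, old data padded
with zeros) and class augmentation (real drift: `m₂` new classes handled by zero-padding
the targets), if `HᵀH` is invertible for `H = H(X, A, b)` then the old least-squares
output weights `β̂ = (HᵀH)⁻¹HᵀT`, padded with `m₂` zero columns, form the unique minimizer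
of `‖H([X 0], [A; ΔA], b) β' − [T 0]‖` — no retraining on the old data is needed. -/
theorem hybrid_drift_zero_padding
    {N d δ L m₁ m₂ : ℕ} (g : ℝ → ℝ)
    (A : Matrix (Fin d) (Fin L) ℝ) (b : Fin L → ℝ)
    (ΔA : Matrix (Fin δ) (Fin L) ℝ) (X : Matrix (Fin N) (Fin d) ℝ)
    (T : Matrix (Fin N) (Fin m₁) ℝ)
    (hinv : IsUnit ((hiddenH g X A b)ᵀ * hiddenH g X A b)) :
    ∀ β' : Matrix (Fin L) (Fin m₁ ⊕ Fin m₂) ℝ,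
      β' ≠ Matrix.fromCols
          (((hiddenH g X A b)ᵀ * hiddenH g X A b)⁻¹ * (hiddenH g X A b)ᵀ * T)
          (0 : Matrix (Fin L) (Fin m₂) ℝ) →
      frobSq (hiddenH g (Matrix.fromCols X (0 : Matrix (Fin N) (Fin δ) ℝ))
            (Matrix.fromRows A ΔA) b *
          Matrix.fromCols
            (((hiddenH g X A b)ᵀ * hiddenH g X A b)⁻¹ * (hiddenH g X A b)ᵀ * T)
            (0 : Matrix (Fin L) (Fin m₂) ℝ) -
          Matrix.fromCols T (0 : Matrix (Fin N) (Fin m₂) ℝ)) <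
        frobSq (hiddenH g (Matrix.fromCols X (0 : Matrix (Fin N) (Fin δ) ℝ))
            (Matrix.fromRows A ΔA) b * β' -
          Matrix.fromCols T (0 : Matrix (Fin N) (Fin m₂) ℝ)) := by
  intro β' hne
  have hH : hiddenH g (Matrix.fromCols X (0 : Matrix (Fin N) (Fin δ) ℝ))
      (Matrix.fromRows A ΔA) b = hiddenH g X A b := by
    have hmul : Matrix.fromCols X (0 : Matrix (Fin N) (Fin δ) ℝ) * Matrix.fromRows A ΔA
        = X * A := by
      rw [Matrix.fromCols_mul_fromRows, Matrix.zero_mul, add_zero]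
    ext i j
    simp [hiddenH, hmul]
  rw [hH]
  set H := hiddenH g X A b
  have key := ls_min H (Matrix.fromCols T (0 : Matrix (Fin N) (Fin m₂) ℝ)) hinv β'
  have hfc : (Hᵀ * H)⁻¹ * Hᵀ * Matrix.fromCols T (0 : Matrix (Fin N) (Fin m₂) ℝ)
      = Matrix.fromCols ((Hᵀ * H)⁻¹ * Hᵀ * T) (0 : Matrix (Fin L) (Fin m₂) ℝ) := by
    rw [Matrix.mul_fromCols, Matrix.mul_zero]
  rw [hfc] at key
  exact key hne
end
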